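/- Let V be a 1-dimensional manifold with a regular C^r differentiable structure (every locally defined C^r function near a point extends to a global C^r function agreeing with it near that point). If a C^r function f : V → ℝ has nonzero derivative (rank 1) at a point x, then f has nonzero derivative at every point y that is not separated from x. -/

import Mathlib

/-- A `C^r` atlas on a 1-dimensional manifold `V` (Hausdorffness not assumed):
charts are open embeddings `ℝ → V` covering `V`, with `C^r` transition maps. -/
structure OneManifoldCr (r : ℕ∞) (V : Type*) [TopologicalSpace V] where
  ι : Type
  chart : ι → ℝ → V
  openEmb : ∀ i, Topology.IsOpenEmbedding (chart i)
  cover : ∀ x : V, ∃ i t, chart i t = x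
  compat : ∀ i j, ContDiffOn ℝ r (fun t => Function.invFun (chart j) (chart i t))
    {t : ℝ | chart i t ∈ Set.range (chart j)}

variable {r : ℕ∞} {V : Type*} [TopologicalSpace V]

/-- `f : V → ℝ` is `C^r` for the atlas `A` if its read in every chart is `C^r`. -/
def OneManifoldCr.IsCrMap (A : OneManifoldCr r V) (f : V → ℝ) : Prop :=
  ∀ i, ContDiff ℝ r (f ∘ A.chart i)

/-- `f` is `C^r` on an open set `U ⊆ V` if its reads in charts are `C^r` on the
preimages of `U`. -/
def OneManifoldCr.IsCrOn (A : OneManifoldCr r V) (f : V → ℝ) (U : Set V) : Prop :=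
  ∀ i, ContDiffOn ℝ r (f ∘ A.chart i) (A.chart i ⁻¹' U)

/-- `f` has rank 1 at `x` if its derivative in some chart through `x` is nonzero. -/
def OneManifoldCr.RankOneAt (A : OneManifoldCr r V) (f : V → ℝ) (x : V) : Prop :=
  ∃ i t, A.chart i t = x ∧ deriv (f ∘ A.chart i) t ≠ 0

/-- The structure is regular if every `C^r` function defined on a neighborhood of a
point coincides, near that point, with a globally defined `C^r` function. -/
def OneManifoldCr.Regular (A : OneManifoldCr r V) : Prop :=
  ∀ (x : V) (U : Set V) (f : V → ℝ), IsOpen U → x ∈ U → A.IsCrOn f U →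
    ∃ g : V → ℝ, A.IsCrMap g ∧ ∃ W : Set V, IsOpen W ∧ x ∈ W ∧ Set.EqOn f g W

/-- Two points are non-separated if all their neighborhoods meet. -/
def NonSeparated {X : Type*} [TopologicalSpace X] (x z : X) : Prop :=
  ∀ U W : Set X, IsOpen U → IsOpen W → x ∈ U → z ∈ W → (U ∩ W).Nonempty

/-- On a 1-manifold with a regular `C^r` structure, if a `C^r` function has rank 1 at
`x`, it also has rank 1 at every point `y` not separated from `x`. -/
theorem rankOne_of_nonSeparated {r : ℕ∞} (hr : 1 ≤ r)
    {V : Type*} [TopologicalSpace V] (A : OneManifoldCr r V)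
    (hreg : A.Regular) (f : V → ℝ) (hf : A.IsCrMap f)
    (x y : V) (hx : A.RankOneAt f x) (hxy : NonSeparated x y) :
    A.RankOneAt f y := by
  classical
  have hr' : (1 : WithTop ℕ∞) ≤ (r : WithTop ℕ∞) := by exact_mod_cast hr
  obtain ⟨i, t0, hit0, hc⟩ := hx
  obtain ⟨j, s0, hjs0⟩ := A.cover y
  refine ⟨j, s0, hjs0, ?_⟩
  intro hb0
  -- sequences
  have hseq : ∀ n : ℕ, ∃ t s : ℝ, A.chart i t = A.chart j s ∧
      |t - t0| < 1 / (n + 1) ∧ |s - s0| < 1 / (n + 1) := by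
    intro n
    have hpos : (0 : ℝ) < 1 / (n + 1) := by positivity
    have hU : IsOpen (A.chart i '' Metric.ball t0 (1 / (n + 1))) :=
      (A.openEmb i).isOpenMap _ Metric.isOpen_ball
    have hW : IsOpen (A.chart j '' Metric.ball s0 (1 / (n + 1))) :=
      (A.openEmb j).isOpenMap _ Metric.isOpen_ball
    obtain ⟨z, hzU, hzW⟩ := hxy _ _ hU hW
      ⟨t0, Metric.mem_ball_self hpos, hit0⟩ ⟨s0, Metric.mem_ball_self hpos, hjs0⟩
    obtain ⟨t, ht, rfl⟩ := hzU
    obtain ⟨s, hs, hts⟩ := hzW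
    exact ⟨t, s, hts.symm, by simpa [Real.dist_eq] using ht, by simpa [Real.dist_eq] using hs⟩
  choose t s hts ht hs using hseq
  have htendaux : ∀ (u : ℕ → ℝ) (u0 : ℝ), (∀ n, |u n - u0| < 1 / (n + 1)) →
      Filter.Tendsto u Filter.atTop (nhds u0) := by
    intro u u0 h
    rw [tendsto_iff_dist_tendsto_zero]
    refine squeeze_zero (fun n => dist_nonneg) (fun n => ?_) tendsto_one_div_add_atTop_nhds_zero_nat
    rw [Real.dist_eq]
    exact (h n).le
  have htt : Filter.Tendsto t Filter.atTop (nhds t0) := htendaux t t0 ht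
  have hst : Filter.Tendsto s Filter.atTop (nhds s0) := htendaux s s0 hs
  -- the transition map φ from chart j to chart i
  set D : Set ℝ := {u : ℝ | A.chart j u ∈ Set.range (A.chart i)} with hDdef
  set φ : ℝ → ℝ := fun u => Function.invFun (A.chart i) (A.chart j u) with hφdef
  have hDopen : IsOpen D :=
    (A.openEmb i).isOpen_range.preimage (A.openEmb j).continuous
  have hφ : ContDiffOn ℝ r φ D := A.compat j i
  have hsnD : ∀ n, s n ∈ D := fun n => ⟨t n, hts n⟩
  have hφs : ∀ n, φ (s n) = t n := by
    intro n
    have : φ (s n) = Function.invFun (A.chart i) (A.chart i (t n)) := by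
      simp [hφdef, hts n]
    rw [this, Function.leftInverse_invFun (A.openEmb i).injective]
  have hchart : ∀ u ∈ D, A.chart i (φ u) = A.chart j u := by
    intro u hu
    exact Function.invFun_eq hu
  -- chain rule: for any g with C^r reads, deriv in chart j at s n factors
  have hchain : ∀ (g : V → ℝ), ContDiff ℝ r (g ∘ A.chart i) → ∀ n,
      deriv (g ∘ A.chart j) (s n) =
        deriv (g ∘ A.chart i) (t n) * deriv φ (s n) := by
    intro g hg n
    have hmem : D ∈ nhds (s n) := hDopen.mem_nhds (hsnD n)
    have heq : (g ∘ A.chart j) =ᶠ[nhds (s n)] ((g ∘ A.chart i) ∘ φ) := by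
      filter_upwards [hmem] with u hu
      simp [Function.comp, hchart u hu]
    rw [heq.deriv_eq]
    rw [deriv_comp (s n) ((hg.differentiable (lt_of_lt_of_le zero_lt_one hr').ne').differentiableAt)
      ((hφ.contDiffAt hmem).differentiableAt (lt_of_lt_of_le zero_lt_one hr').ne')]
    rw [hφs n]
  -- regularity: extend the chart-j coordinate function
  have hinv : A.IsCrOn (Function.invFun (A.chart j)) (Set.range (A.chart j)) := by
    intro k
    exact A.compat k j
  obtain ⟨G, hG, W, hWopen, hyW, hEqW⟩ := hreg y (Set.range (A.chart j))
    (Function.invFun (A.chart j)) (A.openEmb j).isOpen_range ⟨s0, hjs0⟩ hinv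
  -- G ∘ chart j is the identity on chart j ⁻¹' W
  have hSopen : IsOpen (A.chart j ⁻¹' W) := hWopen.preimage (A.openEmb j).continuous
  have hGid : ∀ u ∈ A.chart j ⁻¹' W, (G ∘ A.chart j) u = u := by
    intro u hu
    have := (hEqW hu).symm
    simp only [Function.comp]
    rw [this, Function.leftInverse_invFun (A.openEmb j).injective]
  have hderivG : ∀ u ∈ A.chart j ⁻¹' W, deriv (G ∘ A.chart j) u = 1 := by
    intro u hu
    have heq : (G ∘ A.chart j) =ᶠ[nhds u] id := by
      filter_upwards [hSopen.mem_nhds hu] with v hv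
      exact hGid v hv
    rw [heq.deriv_eq, deriv_id]
  -- eventually s n ∈ chart j ⁻¹' W
  have hev : ∀ᶠ n in Filter.atTop, s n ∈ A.chart j ⁻¹' W := by
    have : Filter.Tendsto (fun n => A.chart j (s n)) Filter.atTop (nhds y) := by
      rw [← hjs0]
      exact ((A.openEmb j).continuous.tendsto s0).comp hst
    exact this (hWopen.mem_nhds hyW)
  -- limits
  set a : ℕ → ℝ := fun n => deriv (f ∘ A.chart i) (t n)
  set b : ℕ → ℝ := fun n => deriv (f ∘ A.chart j) (s n)
  set p : ℕ → ℝ := fun n => deriv φ (s n)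
  set q : ℕ → ℝ := fun n => deriv (G ∘ A.chart i) (t n)
  have hta : Filter.Tendsto a Filter.atTop (nhds (deriv (f ∘ A.chart i) t0)) :=
    (((hf i).continuous_deriv hr').tendsto t0).comp htt
  have htb : Filter.Tendsto b Filter.atTop (nhds 0) := by
    have := (((hf j).continuous_deriv hr').tendsto s0).comp hst
    rwa [hb0] at this
  have htq : Filter.Tendsto q Filter.atTop (nhds (deriv (G ∘ A.chart i) t0)) :=
    (((hG i).continuous_deriv hr').tendsto t0).comp htt
  have hane : ∀ᶠ n in Filter.atTop, a n ≠ 0 := hta.eventually_ne hc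
  have hba : ∀ n, b n = a n * p n := fun n => hchain f (hf i) n
  have htp : Filter.Tendsto p Filter.atTop (nhds 0) := by
    have hdiv : Filter.Tendsto (fun n => b n / a n) Filter.atTop
        (nhds (0 / deriv (f ∘ A.chart i) t0)) := htb.div hta hc
    rw [zero_div] at hdiv
    refine hdiv.congr' ?_
    filter_upwards [hane] with n hn
    rw [hba n]
    field_simp
  have hqp : Filter.Tendsto (fun n => q n * p n) Filter.atTop (nhds 0) := by
    have := htq.mul htp
    rwa [mul_zero] at this
  have hone : ∀ᶠ n in Filter.atTop, q n * p n = 1 := by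
    filter_upwards [hev] with n hn
    rw [← hchain G (hG i) n, hderivG (s n) hn]
  have : Filter.Tendsto (fun n => q n * p n) Filter.atTop (nhds 1) := by
    refine Filter.Tendsto.congr' ?_ tendsto_const_nhds
    filter_upwards [hone] with n hn using hn.symm
  exact zero_ne_one (tendsto_nhds_unique hqp this)
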